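/- Let α be a linearly ordered type, T a finitely branching tree over α, [T] its set of infinite branches, < the lexicographic order, and T' = {v ∈ T : v < P for every P ∈ [T]}. Then the lexicographic order restricted to T' is a well-order that is order-isomorphic to an initial segment of ω (i.e., order-isomorphic either to a finite linear order or to ℕ). -/

import Mathlib

/-- `T` is a tree over `α`: a set of finite words closed under taking prefixes. -/
def IsTree {α : Type*} (T : Set (List α)) : Prop :=
  ∀ t ∈ T, ∀ s : List α, s <+: t → s ∈ T

/-- `T` is finitely branching: each node has only finitely many children. -/
def FinitelyBranching {α : Type*} (T : Set (List α)) : Prop :=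
  ∀ t ∈ T, {a : α | t ++ [a] ∈ T}.Finite

/-- `P : ℕ → α` is an infinite branch of `T`: all of its finite initial segments lie in `T`. -/
def IsBranch {α : Type*} (T : Set (List α)) (P : ℕ → α) : Prop :=
  ∀ n : ℕ, (List.ofFn fun i : Fin n => P i) ∈ T

/-- A node `v` is lexicographically below a branch `P` iff `v < w` for some finite
prefix `w` of `P`. -/
def NodeLtBranch {α : Type*} [LinearOrder α] (v : List α) (P : ℕ → α) : Prop :=
  ∃ n : ℕ, List.Lex (· < ·) v (List.ofFn fun i : Fin n => P i)

/-- `T' = {v ∈ T : v < P for every infinite branch P of T}`. -/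
def Tprime {α : Type*} [LinearOrder α] (T : Set (List α)) : Set (List α) :=
  {v ∈ T | ∀ P : ℕ → α, IsBranch T P → NodeLtBranch v P}


namespace TreeAux

open List

variable {α : Type*}

def subtreeAt (T : Set (List α)) (s : List α) : Set (List α) := {u | s ++ u ∈ T}

lemma subtree_isTree {T : Set (List α)} (hT : IsTree T) (s : List α) :
    IsTree (subtreeAt T s) := by
  rintro t ht u ⟨r, rfl⟩
  exact hT (s ++ (u ++ r)) ht (s ++ u) ⟨r, by simp⟩

lemma subtree_fb {T : Set (List α)} (hFB : FinitelyBranching T) (s : List α) :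
    FinitelyBranching (subtreeAt T s) := by
  intro t ht
  have := hFB (s ++ t) ht
  apply this.subset
  intro a ha
  simpa [subtreeAt] using ha

lemma exists_infinite_child {T : Set (List α)} (hT : IsTree T) (hFB : FinitelyBranching T)
    {t : List α} (ht : t ∈ T) (hinf : (subtreeAt T t).Infinite) :
    ∃ a, t ++ [a] ∈ T ∧ (subtreeAt T (t ++ [a])).Infinite := by
  by_contra h
  push_neg at h
  apply hinf
  have hsub : subtreeAt T t ⊆
      insert [] (⋃ a ∈ {a | t ++ [a] ∈ T}, (a :: ·) '' subtreeAt T (t ++ [a])) := by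
    intro u hu
    match u with
    | [] => exact Set.mem_insert _ _
    | b :: u' =>
      have hb : t ++ [b] ∈ T := hT _ hu (t ++ [b]) ⟨u', by simp⟩
      refine Set.mem_insert_iff.2 (Or.inr ?_)
      exact Set.mem_biUnion hb ⟨u', by simpa [subtreeAt] using hu, rfl⟩
  refine Set.Finite.subset (Set.Finite.insert _ ((hFB t ht).biUnion fun a ha => ?_)) hsub
  exact (h a ha).image _

end TreeAux

namespace TreeAux

variable {α : Type*}

noncomputable def branchAux {T : Set (List α)} (hT : IsTree T) (hFB : FinitelyBranching T)
    (h0 : [] ∈ T) (hinf : T.Infinite) :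
    ℕ → {t : List α // t ∈ T ∧ (subtreeAt T t).Infinite}
  | 0 => ⟨[], h0, by simpa [subtreeAt] using hinf⟩
  | n + 1 =>
    let p := branchAux hT hFB h0 hinf n
    let h := exists_infinite_child hT hFB p.2.1 p.2.2
    ⟨p.1 ++ [Classical.choose h], (Classical.choose_spec h).1, (Classical.choose_spec h).2⟩

noncomputable def branchFun {T : Set (List α)} (hT : IsTree T) (hFB : FinitelyBranching T)
    (h0 : [] ∈ T) (hinf : T.Infinite) (n : ℕ) : α :=
  Classical.choose (exists_infinite_child hT hFB (branchAux hT hFB h0 hinf n).2.1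
    (branchAux hT hFB h0 hinf n).2.2)

lemma branchAux_eq {T : Set (List α)} (hT : IsTree T) (hFB : FinitelyBranching T)
    (h0 : [] ∈ T) (hinf : T.Infinite) (n : ℕ) :
    (branchAux hT hFB h0 hinf n).1 = List.ofFn (fun i : Fin n => branchFun hT hFB h0 hinf i) := by
  induction n with
  | zero => simp [branchAux]
  | succ n ih =>
      rw [List.ofFn_succ']
      show (branchAux hT hFB h0 hinf n).1 ++ [branchFun hT hFB h0 hinf n] = _
      rw [ih]
      simp [List.concat_eq_append]

lemma konig {T : Set (List α)} (hT : IsTree T) (hFB : FinitelyBranching T)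
    (hinf : T.Infinite) : ∃ P : ℕ → α, IsBranch T P := by
  obtain ⟨t, ht⟩ := hinf.nonempty
  have h0 : [] ∈ T := hT t ht [] (List.nil_prefix)
  refine ⟨branchFun hT hFB h0 hinf, fun n => ?_⟩
  rw [← branchAux_eq]
  exact (branchAux hT hFB h0 hinf n).2.1

lemma exists_branch_thru {T : Set (List α)} (hT : IsTree T) (hFB : FinitelyBranching T)
    {s : List α} (hs : s ∈ T) (hinf : (subtreeAt T s).Infinite) :
    ∃ P : ℕ → α, IsBranch T P ∧ ∀ i : ℕ, ∀ h : i < s.length, P i = s.get ⟨i, h⟩ := by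
  obtain ⟨Q, hQ⟩ := konig (subtree_isTree hT s) (subtree_fb hFB s) hinf
  refine ⟨fun n => if h : n < s.length then s.get ⟨n, h⟩ else Q (n - s.length), fun n => ?_,
    fun i h => by simp [h]⟩
  rcases le_or_gt n s.length with h | h
  · have heq : (List.ofFn fun i : Fin n => if h : (i : ℕ) < s.length then s.get ⟨i, h⟩
        else Q (i - s.length)) = s.take n := by
      apply List.ext_getElem
      · simp [h]
      · intro i h1 h2
        have hi : i < s.length := lt_of_lt_of_le (by simpa using h1) h
        simp [hi, List.getElem_take]
    rw [heq]
    exact hT s hs _ (List.take_prefix n s)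
  · have heq : (List.ofFn fun i : Fin n => if h : (i : ℕ) < s.length then s.get ⟨i, h⟩
        else Q (i - s.length)) = s ++ List.ofFn (fun j : Fin (n - s.length) => Q j) := by
      apply List.ext_getElem
      · simp; omega
      · intro i h1 h2
        simp only [List.getElem_ofFn]
        rcases lt_or_ge i s.length with hi | hi
        · simp [hi, List.getElem_append_left hi]
        · have : ¬ i < s.length := not_lt.2 hi
          rw [List.getElem_append_right hi]
          simp [this]
    rw [heq]
    exact hQ (n - s.length)

end TreeAux

namespace TreeAux

variable {α : Type*} [LinearOrder α]

lemma not_lex_of_prefix : ∀ {u v : List α}, u <+: v → ¬ List.Lex (· < ·) v u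
  | [], _, _, h => (List.not_lex_nil h)
  | a :: u, v, hp, h => by
    obtain ⟨r, rfl⟩ := hp
    cases h with
    | cons h => exact not_lex_of_prefix ⟨r, rfl⟩ h
    | rel h => exact lt_irrefl _ h

lemma lex_mid : ∀ (p : List α) {c b : α} {r t : List α},
    List.Lex (· < ·) (p ++ c :: r) (p ++ b :: t) → c < b ∨ c = b
  | [], c, b, r, t, h => by
    cases h with
    | cons _ => exact Or.inr rfl
    | rel h => exact Or.inl h
  | a :: p, c, b, r, t, h => by
    cases h with
    | cons h => exact lex_mid p h
    | rel h => exact absurd h (lt_irrefl a)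

lemma lex_decomp : ∀ {w v : List α}, List.Lex (· < ·) w v →
    w <+: v ∨ ∃ p a c t r, w = p ++ a :: t ∧ v = p ++ c :: r ∧ a < c := by
  intro w v h
  induction h with
  | nil => exact Or.inl List.nil_prefix
  | @rel a l₁ b l₂ h => exact Or.inr ⟨[], a, b, l₁, l₂, rfl, rfl, h⟩
  | @cons a l₁ l₂ h ih =>
    rcases ih with hp | ⟨p, x, c, t, r, rfl, rfl, hlt⟩
    · obtain ⟨k, hk⟩ := hp
      exact Or.inl ⟨k, by simp [hk]⟩
    · exact Or.inr ⟨a :: p, x, c, t, r, rfl, rfl, hlt⟩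

lemma left_subtree_finite {T : Set (List α)} (hT : IsTree T) (hFB : FinitelyBranching T)
    {v : List α} (hv : v ∈ Tprime T) {p : List α} {b c : α} {r : List α}
    (hvpc : v = p ++ c :: r) (hb : p ++ [b] ∈ T) (hbc : b < c) :
    (subtreeAt T (p ++ [b])).Finite := by
  by_contra hinf
  have hinf' : (subtreeAt T (p ++ [b])).Infinite := hinf
  obtain ⟨P, hP, hPs⟩ := exists_branch_thru hT hFB hb hinf'
  obtain ⟨n, hn⟩ := hv.2 P hP
  set u : List α := List.ofFn (fun i : Fin n => P i) with hu
  have hslen : (p ++ [b]).length = p.length + 1 := by simp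
  rcases le_or_gt n p.length with h | h
  · -- u is a prefix of v
    have heq : u = v.take n := by
      apply List.ext_getElem
      · simp [hu, hvpc]; omega
      · intro i h1 h2
        have hi : i < n := by simpa [hu] using h1
        have hip : i < p.length := lt_of_lt_of_le hi h
        have hips : i < (p ++ [b]).length := by simp; omega
        simp only [hu, List.getElem_ofFn, List.getElem_take]
        rw [hPs i hips]
        simp [hvpc, List.getElem_append_left hip, List.get_eq_getElem,
          List.getElem_append_left hip]
    rw [heq] at hn
    exact not_lex_of_prefix (List.take_prefix n v) hn
  · -- u = p ++ b :: _
    have hlen : p.length < u.length := by simpa [hu] using h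
    have htake : u.take p.length = p := by
      apply List.ext_getElem
      · simp [hu]; omega
      · intro i h1 h2
        have hip : i < p.length := by simpa using h2
        have hin : i < n := by omega
        have hips : i < (p ++ [b]).length := by simp; omega
        simp only [List.getElem_take, hu, List.getElem_ofFn]
        rw [hPs i hips]
        simp [List.get_eq_getElem, List.getElem_append_left hip]
    have hget : u[p.length] = b := by
      have hips : p.length < (p ++ [b]).length := by simp
      have : u[p.length] = P p.length := by simp [hu]
      rw [this, hPs p.length hips]
      simp [List.get_eq_getElem]
    have hdec : u = p ++ b :: u.drop (p.length + 1) := by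
      conv_lhs => rw [← List.take_append_drop p.length u]
      rw [htake, List.drop_eq_getElem_cons hlen, hget]
    rw [hvpc, hdec] at hn
    rcases lex_mid p hn with h' | h'
    · exact absurd h' (not_lt.2 hbc.le)
    · exact absurd h' (ne_of_gt hbc)

lemma preds_finite {T : Set (List α)} (hT : IsTree T) (hFB : FinitelyBranching T)
    {v : List α} (hv : v ∈ Tprime T) : {w ∈ T | List.Lex (· < ·) w v}.Finite := by
  have hvT : v ∈ T := hv.1
  have hbig : ({w | w <+: v} ∪ ⋃ i : Fin v.length,
      ⋃ b ∈ {a | a < v[(i:ℕ)] ∧ v.take i ++ [a] ∈ T},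
        ((v.take i ++ [b]) ++ ·) '' subtreeAt T (v.take i ++ [b])).Finite := by
    apply Set.Finite.union
    · apply (Set.finite_range (fun m : Fin (v.length + 1) => v.take m)).subset
      rintro w hw
      have hl : w.length ≤ v.length := hw.length_le
      exact ⟨⟨w.length, by omega⟩, (List.prefix_iff_eq_take.mp hw).symm⟩
    · apply Set.finite_iUnion
      intro i
      apply Set.Finite.biUnion
      · exact (hFB (v.take i) (hT v hvT _ (List.take_prefix _ v))).subset
          (fun a ha => ha.2)
      · intro b hb
        apply Set.Finite.image
        have hvdec : v = v.take i ++ v[(i:ℕ)] :: v.drop (i + 1) := by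
          conv_lhs => rw [← List.take_append_drop (i : ℕ) v]
          rw [List.drop_eq_getElem_cons i.2]
        exact left_subtree_finite hT hFB hv hvdec hb.2 hb.1
  apply hbig.subset
  rintro w ⟨hwT, hlex⟩
  rcases lex_decomp hlex with hp | ⟨p, a, c, t, r, rfl, hveq, hac⟩
  · exact Or.inl hp
  · right
    subst hveq
    have hplen : p.length < (p ++ c :: r).length := by simp
    have htake : (p ++ c :: r).take p.length = p := List.take_left
    have hgetv : (p ++ c :: r)[p.length]'hplen = c := by
      rw [List.getElem_append_right (le_refl p.length)]; simp
    refine Set.mem_iUnion.2 ⟨⟨p.length, hplen⟩, ?_⟩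
    refine Set.mem_biUnion (x := a) ?_ ?_
    · constructor
      · simpa [hgetv] using hac
      · show List.take p.length (p ++ c :: r) ++ [a] ∈ T
        rw [htake]
        exact hT _ hwT (p ++ [a]) ⟨t, by simp⟩
    · refine ⟨t, ?_, ?_⟩
      · show List.take p.length (p ++ c :: r) ++ [a] ++ t ∈ T
        rw [htake]; simpa using hwT
      · show List.take p.length (p ++ c :: r) ++ [a] ++ t = p ++ a :: t
        rw [htake]; simp

end TreeAux


/-- The lexicographic order restricted to `T'` is a well-order order-isomorphic to an
initial segment of `ω`: it is order-isomorphic either to some `Fin k` or to `ℕ`. -/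
theorem Tprime_wellOrdered {α : Type*} [LinearOrder α] (T : Set (List α))
    (hT : IsTree T) (hFB : FinitelyBranching T) :
    (∃ k : ℕ, Nonempty
        ((fun v w : ↥(Tprime T) => List.Lex (· < ·) (v : List α) (w : List α)) ≃r
          ((· < ·) : Fin k → Fin k → Prop))) ∨
      Nonempty
        ((fun v w : ↥(Tprime T) => List.Lex (· < ·) (v : List α) (w : List α)) ≃r
          ((· < ·) : ℕ → ℕ → Prop)) := by
  classical
  have htrans : ∀ u v w : ↥(Tprime T), List.Lex (· < ·) (u : List α) (v : List α) →
      List.Lex (· < ·) (v : List α) (w : List α) →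
      List.Lex (· < ·) (u : List α) (w : List α) := fun u v w h1 h2 =>
    List.lt_trans h1 h2
  have hirr : ∀ v : ↥(Tprime T), ¬ List.Lex (· < ·) (v : List α) (v : List α) := fun v =>
    TreeAux.not_lex_of_prefix List.prefix_rfl
  have htri : ∀ v w : ↥(Tprime T), List.Lex (· < ·) (v : List α) (w : List α) ∨ v = w ∨
      List.Lex (· < ·) (w : List α) (v : List α) := by
    intro v w
    rcases trichotomous_of (List.Lex (· < ·) : List α → List α → Prop) (v : List α) (w : List α) with h | h | h
    · exact Or.inl h
    · exact Or.inr (Or.inl (Subtype.ext h))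
    · exact Or.inr (Or.inr h)
  have hfin : ∀ v : ↥(Tprime T),
      {w : ↥(Tprime T) | List.Lex (· < ·) (w : List α) (v : List α)}.Finite := by
    intro v
    apply Set.Finite.of_finite_image (f := Subtype.val) ?_ Subtype.val_injective.injOn
    apply (TreeAux.preds_finite hT hFB v.2).subset
    rintro _ ⟨w, hw, rfl⟩
    exact ⟨w.2.1, hw⟩
  set N : ↥(Tprime T) → ℕ :=
    fun v => {w : ↥(Tprime T) | List.Lex (· < ·) (w : List α) (v : List α)}.ncard with hN
  have hmono : ∀ v w : ↥(Tprime T), List.Lex (· < ·) (v : List α) (w : List α) →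
      N v < N w := by
    intro v w h
    apply Set.ncard_lt_ncard _ (hfin w)
    constructor
    · intro u hu
      exact htrans _ _ _ hu h
    · intro hsub
      exact hirr v (hsub h)
  have hinj : Function.Injective N := by
    intro v w h
    rcases htri v w with h1 | h1 | h1
    · exact absurd h (Nat.ne_of_lt (hmono _ _ h1))
    · exact h1
    · exact absurd h.symm (Nat.ne_of_lt (hmono _ _ h1))
  have hrefl : ∀ v w : ↥(Tprime T), N v < N w →
      List.Lex (· < ·) (v : List α) (w : List α) := by
    intro v w h
    rcases htri v w with h1 | h1 | h1
    · exact h1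
    · subst h1; omega
    · exact absurd (hmono _ _ h1) (by omega)
  have hsucc : ∀ v : ↥(Tprime T), N v ≠ 0 → ∃ w : ↥(Tprime T),
      List.Lex (· < ·) (w : List α) (v : List α) ∧ N v = N w + 1 := by
    intro v hv
    have hne : {w : ↥(Tprime T) | List.Lex (· < ·) (w : List α) (v : List α)}.Nonempty := by
      rw [Set.nonempty_iff_ne_empty]
      intro hE
      apply hv
      rw [hN]
      simp only [hE, Set.ncard_empty]
    obtain ⟨w, hw, hmax⟩ := Set.exists_max_image _ N (hfin v) hne
    refine ⟨w, hw, ?_⟩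
    have heq : {u : ↥(Tprime T) | List.Lex (· < ·) (u : List α) (v : List α)} =
        insert w {u : ↥(Tprime T) | List.Lex (· < ·) (u : List α) (w : List α)} := by
      ext u
      simp only [Set.mem_insert_iff, Set.mem_setOf_eq]
      constructor
      · intro hu
        rcases htri u w with h1 | h1 | h1
        · exact Or.inr h1
        · exact Or.inl h1
        · exact absurd (hmono _ _ h1) (not_lt.2 (hmax u hu))
      · rintro (rfl | hu)
        · exact hw
        · exact htrans _ _ _ hu hw
    have hcalc : {u : ↥(Tprime T) | List.Lex (· < ·) (u : List α) (v : List α)}.ncard =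
        {u : ↥(Tprime T) | List.Lex (· < ·) (u : List α) (w : List α)}.ncard + 1 := by
      rw [heq]
      exact Set.ncard_insert_of_notMem
        (show w ∉ {u : ↥(Tprime T) | List.Lex (· < ·) (u : List α) (w : List α)} from hirr w)
        (hfin w)
    exact hcalc
  have hstep : ∀ n : ℕ, (∃ v, n ≤ N v) → ∃ v, N v = n := by
    intro n hex
    have hK : ∃ k, n ≤ k ∧ ∃ v, N v = k := hex.elim fun v hv => ⟨N v, hv, v, rfl⟩
    obtain ⟨hk1, v, hv⟩ := Nat.find_spec hK
    rcases eq_or_lt_of_le hk1 with he | hlt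
    · exact ⟨v, by omega⟩
    · exfalso
      have hv0 : N v ≠ 0 := by omega
      obtain ⟨w, hwv, hNw⟩ := hsucc v hv0
      exact Nat.find_min hK (show N w < Nat.find hK by omega) ⟨by omega, w, rfl⟩
  by_cases hfS : (Tprime T).Finite
  · left
    haveI : Fintype ↥(Tprime T) := hfS.fintype
    refine ⟨Fintype.card ↥(Tprime T), ⟨?_⟩⟩
    have hlt : ∀ v, N v < Fintype.card ↥(Tprime T) := by
      intro v
      have hcard : N v < (Set.univ : Set ↥(Tprime T)).ncard := by
        apply Set.ncard_lt_ncard _ Set.finite_univ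
        exact ⟨Set.subset_univ _, fun hsub => hirr v (hsub (Set.mem_univ v))⟩
      simpa [Set.ncard_univ, Nat.card_eq_fintype_card] using hcard
    set f : ↥(Tprime T) → Fin (Fintype.card ↥(Tprime T)) := fun v => ⟨N v, hlt v⟩ with hf
    have hfinj : Function.Injective f := fun v w h => hinj (by simpa [hf, Fin.ext_iff] using h)
    have hfsurj : Function.Surjective f := by
      intro m
      have hex : ∃ v, (m : ℕ) ≤ N v := by
        by_contra hcon
        push_neg at hcon
        have hinj2 : Function.Injective
            (fun v : ↥(Tprime T) => (⟨N v, hcon v⟩ : Fin (m : ℕ))) :=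
          fun v w h => hinj (by simpa [Fin.ext_iff] using h)
        have := Fintype.card_le_of_injective _ hinj2
        simp only [Fintype.card_fin] at this
        omega
      obtain ⟨v, hv⟩ := hstep m hex
      exact ⟨v, Fin.ext hv⟩
    refine ⟨Equiv.ofBijective f ⟨hfinj, hfsurj⟩, ?_⟩
    intro v w
    show f v < f w ↔ _
    rw [Fin.lt_def]
    show N v < N w ↔ _
    exact ⟨hrefl v w, hmono v w⟩
  · right
    refine ⟨?_⟩
    have hsurj : Function.Surjective N := by
      intro n
      apply hstep
      by_contra hcon
      push_neg at hcon
      apply hfS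
      haveI : Finite ↥(Tprime T) := Finite.of_injective
        (fun v => (⟨N v, hcon v⟩ : Fin n))
        (fun v w h => hinj (by simpa [Fin.ext_iff] using h))
      exact Set.toFinite _
    refine ⟨Equiv.ofBijective N ⟨hinj, hsurj⟩, ?_⟩
    intro v w
    show N v < N w ↔ _
    exact ⟨hrefl v w, hmono v w⟩
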